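/- Let L be a positive integer, let a, M be positive integers dividing L, and let g ∈ ℂ^L be real-valued such that the Gabor system G(g,a,M) is a frame (equivalently, its frame operator S is invertible). Then the canonical dual window S^{−1}g is real-valued. -/

import Mathlib

/-- The Gabor atom `M_{m/M} T_n g` on `ℂ^L` (identified with `ZMod L → ℂ`):
circular translation by `n` followed by modulation `e^{2πiml/M}`. -/
noncomputable def gaborAtom (L M : ℕ) [NeZero L] (g : ZMod L → ℂ) (m n : ℕ) :
    ZMod L → ℂ :=
  fun l => g (l - (n : ZMod L)) *
    Complex.exp (2 * Real.pi * Complex.I * (m : ℂ) * (l.val : ℂ) / (M : ℂ))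

/-- The inner product `⟨f, g⟩ = ∑_{l=0}^{L-1} f[l]·conj(g[l])` on `ℂ^L`. -/
noncomputable def ipL (L : ℕ) [NeZero L] (f g : ZMod L → ℂ) : ℂ :=
  ∑ l : ZMod L, f l * star (g l)

/-- The Gabor frame operator of `G(g,a,M)` on `ℂ^L`:
`Sf = ∑_{n=0}^{L/a-1} ∑_{m=0}^{M-1} ⟨f, g_{m,n}⟩ g_{m,n}` with `g_{m,n} = M_{m/M}T_{na}g`. -/
noncomputable def frameOp (L a M : ℕ) [NeZero L] (g : ZMod L → ℂ)
    (f : ZMod L → ℂ) : ZMod L → ℂ :=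
  fun l => ∑ n : Fin (L / a), ∑ m : Fin M,
    ipL L f (gaborAtom L M g m ((n : ℕ) * a)) * gaborAtom L M g m ((n : ℕ) * a) l

lemma star_gaborAtom (L M : ℕ) [NeZero L] [NeZero M] (g : ZMod L → ℂ)
    (hgreal : ∀ l, (g l).im = 0) (m : Fin M) (n : ℕ) (l : ZMod L) :
    star (gaborAtom L M g (m : ℕ) n l) = gaborAtom L M g ((-m : Fin M) : ℕ) n l := by
  unfold gaborAtom
  have hg : star (g (l - n)) = g (l - n) := Complex.conj_eq_iff_im.mpr (hgreal _)
  have hdvd : (M : ℕ) ∣ ((-m : Fin M) : ℕ) + (m : ℕ) := by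
    rcases eq_or_ne m 0 with h | h
    · simp [h]
    · rw [Fin.coe_neg]
      have hm : (m : ℕ) ≠ 0 := by
        exact fun h' => h (Fin.ext (by simp [h']))
      have hlt : (M : ℕ) - (m : ℕ) < M := by
        omega
      rw [Nat.mod_eq_of_lt hlt]
      have : M - (m : ℕ) + (m : ℕ) = M := by omega
      simp [this]
  obtain ⟨k, hk⟩ := hdvd
  have hM0 : (M : ℂ) ≠ 0 := Nat.cast_ne_zero.mpr (NeZero.ne M)
  have key : Complex.exp (2 * Real.pi * Complex.I * (((-m : Fin M) : ℕ) : ℂ) * (l.val : ℂ) / (M : ℂ))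
      = Complex.exp (-(2 * Real.pi * Complex.I * ((m : ℕ) : ℂ) * (l.val : ℂ) / (M : ℂ))) := by
    have hkC : (((-m : Fin M) : ℕ) : ℂ) + ((m : ℕ) : ℂ) = (M : ℂ) * (k : ℂ) := by
      exact_mod_cast congrArg (Nat.cast : ℕ → ℂ) hk
    have harg : (2 * Real.pi * Complex.I * (((-m : Fin M) : ℕ) : ℂ) * (l.val : ℂ) / (M : ℂ))
        = -(2 * Real.pi * Complex.I * ((m : ℕ) : ℂ) * (l.val : ℂ) / (M : ℂ))
          + ((k * l.val : ℕ) : ℤ) * (2 * Real.pi * Complex.I) := by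
      have hcast : (((k * l.val : ℕ) : ℤ) : ℂ) = (k : ℂ) * (l.val : ℂ) := by push_cast; ring
      rw [hcast]
      generalize ((l.val : ℕ) : ℂ) = lv
      field_simp
      linear_combination lv * hkC
    rw [harg, Complex.exp_add, Complex.exp_int_mul_two_pi_mul_I, mul_one]
  have hconj : (starRingEnd ℂ) (2 * Real.pi * Complex.I * ((m : ℕ) : ℂ) * (l.val : ℂ) / (M : ℂ))
      = -(2 * Real.pi * Complex.I * ((m : ℕ) : ℂ) * (l.val : ℂ) / (M : ℂ)) := by
    simp only [map_div₀, map_mul, Complex.conj_I, Complex.conj_natCast, Complex.conj_ofReal,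
      map_ofNat]
    ring
  rw [star_mul', hg, Complex.star_def, ← Complex.exp_conj, hconj, ← key]

lemma frameOp_star (L a M : ℕ) [NeZero L] [NeZero M] (g : ZMod L → ℂ)
    (hgreal : ∀ l, (g l).im = 0) (f : ZMod L → ℂ) :
    frameOp L a M g (fun l => star (f l)) = fun l => star (frameOp L a M g f l) := by
  funext l
  unfold frameOp
  rw [star_sum]
  refine Finset.sum_congr rfl fun n _ => ?_
  rw [star_sum]
  refine Fintype.sum_equiv (Equiv.neg (Fin M)) _ _ fun m => ?_
  simp only [Equiv.neg_apply, star_mul']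
  have h1 : star (gaborAtom L M g ((-m : Fin M) : ℕ) ((n : ℕ) * a) l)
      = gaborAtom L M g (m : ℕ) ((n : ℕ) * a) l := by
    rw [star_gaborAtom L M g hgreal (-m), neg_neg]
  have h2 : ipL L (fun l => star (f l)) (gaborAtom L M g (m : ℕ) ((n : ℕ) * a))
      = star (ipL L f (gaborAtom L M g ((-m : Fin M) : ℕ) ((n : ℕ) * a))) := by
    unfold ipL
    rw [star_sum]
    refine Finset.sum_congr rfl fun x _ => ?_
    rw [star_mul', star_star, star_gaborAtom L M g hgreal m]
  rw [h1, h2]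

/-- if `g ∈ ℂ^L` is real-valued and `G(g,a,M)` is a frame (its frame
operator `S` is invertible), then the canonical dual window `S⁻¹g` is real-valued. -/
theorem canonical_dual_real
    (L a M : ℕ) [NeZero L] (ha : 0 < a) (hM : 0 < M) (haL : a ∣ L) (hML : M ∣ L)
    (g : ZMod L → ℂ) (hgreal : ∀ l : ZMod L, (g l).im = 0)
    (hframe : Function.Bijective (frameOp L a M g))
    (γ : ZMod L → ℂ) (hγ : frameOp L a M g γ = g) :
    ∀ l : ZMod L, (γ l).im = 0 := by
  haveI : NeZero M := ⟨hM.ne'⟩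
  have h1 : frameOp L a M g (fun l => star (γ l)) = g := by
    rw [frameOp_star L a M g hgreal γ, hγ]
    funext l
    exact Complex.conj_eq_iff_im.mpr (hgreal l)
  have h2 : (fun l => star (γ l)) = γ := hframe.injective (h1.trans hγ.symm)
  intro l
  have := congrFun h2 l
  have him : -(γ l).im = (γ l).im := by
    simpa [Complex.ext_iff] using this
  linarith
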